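/- The digit-interleaving map H_k : Z_p^k → Z_p satisfies: x ≡ y mod p^n in Z_p^k if and only if H_k(x) ≡ H_k(y) mod p^{kn} in Z_p, for all n ≥ 1. -/

import Mathlib

open MeasureTheory

variable {p : ℕ}

/-- The `i`-th base-`p` digit of a `p`-adic integer. -/
noncomputable def padicDigit [Fact p.Prime] (x : ℤ_[p]) (i : ℕ) : ℕ :=
  (x.appr (i + 1) - x.appr i) / p ^ i

/-- Congruence modulo `p^n` on `ℤ_[p]`. -/
def CongMod [Fact p.Prime] (n : ℕ) (x y : ℤ_[p]) : Prop :=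
  PadicInt.toZModPow n x = PadicInt.toZModPow n y

/-- Coordinatewise congruence modulo `p^n` on `ℤ_[p]^k`. -/
def CongModVec [Fact p.Prime] {k : ℕ} (n : ℕ) (x y : Fin k → ℤ_[p]) : Prop :=
  ∀ i, CongMod n (x i) (y i)

/-- Coordinatewise reduction `ℤ_[p]^k → (ℤ/p^n ℤ)^k`. -/
noncomputable def redVec [Fact p.Prime] {k : ℕ} (n : ℕ) (x : Fin k → ℤ_[p]) : Fin k → ZMod (p ^ n) :=
  fun i => PadicInt.toZModPow n (x i)

/-- The digit-interleaving map `H_k : ℤ_[p]^k → ℤ_[p]`. -/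
noncomputable def Hk [Fact p.Prime] (k : ℕ) (hk : 0 < k) (x : Fin k → ℤ_[p]) : ℤ_[p] :=
  ∑' m : ℕ, (padicDigit (x ⟨m % k, Nat.mod_lt m hk⟩) (m / k) : ℤ_[p]) * (p : ℤ_[p]) ^ m

/-- `F` is transitive modulo `p^n`: the induced map on `(ℤ/p^n ℤ)^k` is a single cycle. -/
def IsTransitiveModVec [Fact p.Prime] {k : ℕ}
    (F : (Fin k → ℤ_[p]) → (Fin k → ℤ_[p])) (n : ℕ) : Prop :=
  ∀ x y : Fin k → ℤ_[p], ∃ j : ℕ, CongModVec n (F^[j] x) y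

/-- `G` is transitive modulo `p^n`: the induced map on `ℤ/p^n ℤ` is a single cycle. -/
def IsTransitiveModZ [Fact p.Prime] (G : ℤ_[p] → ℤ_[p]) (n : ℕ) : Prop :=
  ∀ x y : ℤ_[p], ∃ j : ℕ, CongMod n (G^[j] x) y

noncomputable instance [Fact p.Prime] : MeasurableSpace ℤ_[p] := borel _
instance [Fact p.Prime] : BorelSpace ℤ_[p] := ⟨rfl⟩

/-- The normalized Haar measure on `ℤ_[p]`. -/
noncomputable def haarZ [Fact p.Prime] : Measure ℤ_[p] :=
  Measure.addHaarMeasure (⊤ : TopologicalSpace.PositiveCompacts ℤ_[p])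

/-- The normalized Haar measure on `ℤ_[p]^k`. -/
noncomputable def haarZk [Fact p.Prime] (k : ℕ) : Measure (Fin k → ℤ_[p]) :=
  Measure.addHaarMeasure (⊤ : TopologicalSpace.PositiveCompacts (Fin k → ℤ_[p]))

section Aux

variable [Fact p.Prime]

private lemma ppos' : 0 < p := (Fact.out (p := p.Prime)).pos

lemma padicDigit_lt (x : ℤ_[p]) (i : ℕ) : padicDigit x i < p := by
  have h1 := x.appr_lt (i+1)
  have hp : 0 < p ^ i := pow_pos ppos' i
  rw [padicDigit, Nat.div_lt_iff_lt_mul hp]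
  calc x.appr (i+1) - x.appr i ≤ x.appr (i+1) := Nat.sub_le _ _
    _ < p ^ (i+1) := h1
    _ = p * p ^ i := by ring

lemma appr_eq_sum (x : ℤ_[p]) (n : ℕ) :
    x.appr n = ∑ j ∈ Finset.range n, padicDigit x j * p ^ j := by
  induction n with
  | zero => simp [PadicInt.appr]
  | succ n ih =>
    rw [Finset.sum_range_succ, ← ih, padicDigit,
      Nat.div_mul_cancel (PadicInt.dvd_appr_sub_appr x n (n+1) (Nat.le_succ n))]
    have := x.appr_mono (Nat.le_succ n)
    simp only [Nat.succ_eq_add_one] at *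
    omega

lemma congMod_iff_appr_eq (n : ℕ) (x y : ℤ_[p]) :
    CongMod n x y ↔ x.appr n = y.appr n := by
  have : NeZero (p^n) := ⟨pow_ne_zero _ ppos'.ne'⟩
  constructor
  · intro h
    have h' : ((x.appr n : ZMod (p^n))) = y.appr n := h
    rw [← ZMod.val_cast_of_lt (x.appr_lt n), ← ZMod.val_cast_of_lt (y.appr_lt n), h']
  · intro h
    show ((x.appr n : ZMod (p^n))) = y.appr n
    rw [h]

lemma sum_digits_lt {N : ℕ} (a : ℕ → ℕ) (ha : ∀ m, a m < p) :
    ∑ m ∈ Finset.range N, a m * p ^ m < p ^ N := by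
  induction N with
  | zero => simp
  | succ N ih =>
    have hp := ppos' (p := p)
    rw [Finset.sum_range_succ, pow_succ, mul_comm (p ^ N) p]
    have h2 : a N * p ^ N ≤ (p - 1) * p ^ N :=
      Nat.mul_le_mul_right _ (by have := ha N; omega)
    have h3 : (p - 1) * p ^ N = p * p ^ N - p ^ N := by rw [Nat.sub_mul, one_mul]
    have h4 : p ^ N ≤ p * p ^ N := Nat.le_mul_of_pos_left _ hp
    omega

lemma digits_unique {N : ℕ} (a b : ℕ → ℕ) (ha : ∀ m, a m < p) (hb : ∀ m, b m < p)
    (h : ∑ m ∈ Finset.range N, a m * p ^ m = ∑ m ∈ Finset.range N, b m * p ^ m) :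
    ∀ m < N, a m = b m := by
  induction N generalizing a b with
  | zero => omega
  | succ N ih =>
    have key : ∀ c : ℕ → ℕ, ∑ m ∈ Finset.range (N+1), c m * p ^ m
        = c 0 + p * ∑ m ∈ Finset.range N, c (m+1) * p ^ m := by
      intro c
      rw [Finset.sum_range_succ' (fun m => c m * p ^ m) N, Finset.mul_sum]
      simp only [pow_succ, pow_zero, mul_one]
      rw [add_comm]
      congr 1
      exact Finset.sum_congr rfl fun i _ => by ring
    rw [key a, key b] at h
    have hp := ppos' (p := p)
    have h0 : a 0 = b 0 := by
      have e1 : (a 0 + p * ∑ m ∈ Finset.range N, a (m+1) * p ^ m) % p = a 0 := by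
        rw [Nat.add_mul_mod_self_left, Nat.mod_eq_of_lt (ha 0)]
      have e2 : (b 0 + p * ∑ m ∈ Finset.range N, b (m+1) * p ^ m) % p = b 0 := by
        rw [Nat.add_mul_mod_self_left, Nat.mod_eq_of_lt (hb 0)]
      rw [← e1, ← e2, h]
    have h1 : ∑ m ∈ Finset.range N, a (m+1) * p ^ m = ∑ m ∈ Finset.range N, b (m+1) * p ^ m :=
      Nat.eq_of_mul_eq_mul_left hp (by omega)
    have := ih (fun m => a (m+1)) (fun m => b (m+1)) (fun m => ha _) (fun m => hb _) h1
    intro m hm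
    cases m with
    | zero => exact h0
    | succ m => exact this m (by omega)

lemma summable_digit_series (c : ℕ → ℕ) :
    Summable (fun m => (c m : ℤ_[p]) * (p : ℤ_[p]) ^ m) := by
  have hp : (1 : ℝ) < p := Nat.one_lt_cast.mpr (Fact.out (p := p.Prime)).one_lt
  apply Summable.of_norm_bounded (g := fun m => ((p : ℝ)⁻¹) ^ m)
  · exact summable_geometric_of_lt_one (by positivity) (inv_lt_one_of_one_lt₀ hp)
  · intro m
    rw [norm_mul, PadicInt.norm_p_pow]
    calc ‖((c m : ℤ_[p]))‖ * (p:ℝ) ^ (-m : ℤ) ≤ 1 * (p:ℝ) ^ (-m : ℤ) := by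
          apply mul_le_mul_of_nonneg_right (PadicInt.norm_le_one _) (by positivity)
      _ = ((p:ℝ)⁻¹) ^ m := by rw [one_mul, zpow_neg, inv_pow, zpow_natCast]

lemma toZModPow_tsum (c : ℕ → ℕ) (N : ℕ) :
    PadicInt.toZModPow N (∑' m : ℕ, (c m : ℤ_[p]) * (p : ℤ_[p]) ^ m)
      = ((∑ m ∈ Finset.range N, c m * p ^ m : ℕ) : ZMod (p ^ N)) := by
  have hs := summable_digit_series (p := p) c
  rw [← Summable.sum_add_tsum_nat_add N hs, map_add]
  have h1 : (∑' m : ℕ, (c (m + N) : ℤ_[p]) * (p : ℤ_[p]) ^ (m + N))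
      = (∑' m : ℕ, (c (m + N) : ℤ_[p]) * (p : ℤ_[p]) ^ m) * (p : ℤ_[p]) ^ N := by
    simp_rw [pow_add, ← mul_assoc]
    exact (summable_digit_series fun m => c (m + N)).tsum_mul_right _
  rw [h1, map_mul, map_pow]
  have h2 : (PadicInt.toZModPow N ((p : ℤ_[p]))) ^ N = 0 := by
    rw [← map_pow]
    have : ((p : ℤ_[p])) ^ N = ((p ^ N : ℕ) : ℤ_[p]) := by push_cast; ring
    rw [this, map_natCast, ZMod.natCast_self]
  rw [h2, mul_zero, add_zero, map_sum]
  push_cast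
  simp [map_mul, map_pow, map_natCast]

lemma congMod_iff_digits (n : ℕ) (x y : ℤ_[p]) :
    CongMod n x y ↔ ∀ j < n, padicDigit x j = padicDigit y j := by
  rw [congMod_iff_appr_eq, appr_eq_sum, appr_eq_sum]
  constructor
  · exact fun h => digits_unique _ _ (padicDigit_lt x) (padicDigit_lt y) h
  · intro h
    exact Finset.sum_congr rfl fun j hj => by rw [h j (Finset.mem_range.mp hj)]

lemma congMod_Hk {k : ℕ} (hk : 0 < k) (N : ℕ) (x y : Fin k → ℤ_[p]) :
    CongMod N (Hk k hk x) (Hk k hk y) ↔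
      ∀ m < N, padicDigit (x ⟨m % k, Nat.mod_lt m hk⟩) (m / k)
             = padicDigit (y ⟨m % k, Nat.mod_lt m hk⟩) (m / k) := by
  have : NeZero (p^N) := ⟨pow_ne_zero _ ppos'.ne'⟩
  set a : ℕ → ℕ := fun m => padicDigit (x ⟨m % k, Nat.mod_lt m hk⟩) (m / k) with haa
  set b : ℕ → ℕ := fun m => padicDigit (y ⟨m % k, Nat.mod_lt m hk⟩) (m / k) with hbb
  have hx : PadicInt.toZModPow N (Hk k hk x)
      = ((∑ m ∈ Finset.range N, a m * p ^ m : ℕ) : ZMod (p ^ N)) := toZModPow_tsum a N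
  have hy : PadicInt.toZModPow N (Hk k hk y)
      = ((∑ m ∈ Finset.range N, b m * p ^ m : ℕ) : ZMod (p ^ N)) := toZModPow_tsum b N
  have halt : ∀ m, a m < p := fun m => padicDigit_lt _ _
  have hblt : ∀ m, b m < p := fun m => padicDigit_lt _ _
  unfold CongMod
  rw [hx, hy]
  constructor
  · intro h
    have hs : ∑ m ∈ Finset.range N, a m * p ^ m = ∑ m ∈ Finset.range N, b m * p ^ m := by
      rw [← ZMod.val_cast_of_lt (sum_digits_lt a halt),
        ← ZMod.val_cast_of_lt (sum_digits_lt b hblt), h]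
    exact digits_unique a b halt hblt hs
  · intro h
    congr 1
    exact Finset.sum_congr rfl fun m hm =>
      congrArg (· * p ^ m) (h m (Finset.mem_range.mp hm))

end Aux

theorem stmt3 [Fact p.Prime] {k : ℕ} (hk : 0 < k) (n : ℕ) (hn : 1 ≤ n)
    (x y : Fin k → ℤ_[p]) :
    CongModVec n x y ↔ CongMod (k * n) (Hk k hk x) (Hk k hk y) := by
  rw [congMod_Hk hk (k * n) x y]
  constructor
  · intro h m hm
    have hj : m / k < n := by
      rw [Nat.div_lt_iff_lt_mul hk, Nat.mul_comm]
      exact hm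
    exact ((congMod_iff_digits n _ _).mp (h ⟨m % k, Nat.mod_lt m hk⟩)) (m / k) hj
  · intro h i
    rw [congMod_iff_digits]
    intro j hj
    set m := i.val + j * k with hm
    have hmlt : m < k * n := by
      have : i.val < k := i.isLt
      calc m < k + j * k := by omega
        _ = (j + 1) * k := by ring
        _ ≤ n * k := Nat.mul_le_mul_right k (by omega)
        _ = k * n := Nat.mul_comm n k
    have hmod : m % k = i.val := by
      rw [hm, Nat.add_mul_mod_self_right, Nat.mod_eq_of_lt i.isLt]
    have hdiv : m / k = j := by
      rw [hm, Nat.add_mul_div_right _ _ hk, Nat.div_eq_of_lt i.isLt, Nat.zero_add]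
    have hfin : (⟨m % k, Nat.mod_lt m hk⟩ : Fin k) = i := Fin.ext hmod
    have := h m hmlt
    rw [hfin, hdiv] at this
    exact this
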